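/- The spine of a trim lattice, with the induced lattice structure, is a distributive lattice. -/

import Mathlib

variable {α : Type*}

/-- An element is join-irreducible if it is not the minimum and is not a join
of two strictly smaller elements. -/
def JoinIrred [Lattice α] (a : α) : Prop :=
  ¬ IsBot a ∧ ∀ b c : α, b < a → c < a → b ⊔ c ≠ a

/-- An element is meet-irreducible if it is not the maximum and is not a meet
of two strictly larger elements. -/
def MeetIrred [Lattice α] (a : α) : Prop :=
  ¬ IsTop a ∧ ∀ b c : α, a < b → a < c → b ⊓ c ≠ a

/-- An element `x` is left modular if `(y ⊔ x) ⊓ z = y ⊔ (x ⊓ z)` for all `y < z`. -/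
def LeftModular [Lattice α] (x : α) : Prop :=
  ∀ y z : α, y < z → (y ⊔ x) ⊓ z = y ⊔ (x ⊓ z)

/-- A maximal chain `⊥ = x 0 ⋖ x 1 ⋖ ⋯ ⋖ x n = ⊤` all of whose elements are left modular. -/
def IsLMChain [Lattice α] {n : ℕ} (x : Fin (n + 1) → α) : Prop :=
  IsBot (x 0) ∧ IsTop (x (Fin.last n)) ∧ (∀ i : Fin n, x i.castSucc ⋖ x i.succ) ∧
    ∀ i, LeftModular (x i)

/-- A finite lattice is trim if it has a left modular maximal chain of `n + 1` elements,
exactly `n` join-irreducibles and exactly `n` meet-irreducibles. -/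
def Trim (α : Type*) [Lattice α] [Finite α] : Prop :=
  ∃ (n : ℕ) (x : Fin (n + 1) → α), IsLMChain x ∧
    Nat.card {v : α // JoinIrred v} = n ∧ Nat.card {v : α // MeetIrred v} = n

/-- The spine of a finite lattice: elements lying on some chain of maximum length. -/
def Spine [Lattice α] [Finite α] (a : α) : Prop :=
  ∃ C : Set α, a ∈ C ∧ IsChain (· ≤ ·) C ∧
    ∀ D : Set α, IsChain (· ≤ ·) D → D.ncard ≤ C.ncard


set_option linter.unusedSectionVars false
set_option linter.unusedVariables false

section AuxLemmas
variable [Lattice α] [Finite α]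

lemma le_of_joinIrred_imp (a : α) : ∀ b : α, (∀ j, JoinIrred j → j ≤ a → j ≤ b) → a ≤ b := by
  induction a using WellFoundedLT.induction with
  | ind a IH =>
    intro b H
    by_cases hji : JoinIrred a
    · exact H a hji le_rfl
    · unfold JoinIrred at hji
      push_neg at hji
      by_cases hbot : IsBot a
      · exact hbot b
      · obtain ⟨u, v, hu, hv, huv⟩ := hji hbot
        have h1 : u ≤ b := IH u hu b fun j hj hja => H j hj (hja.trans hu.le)
        have h2 : v ≤ b := IH v hv b fun j hj hja => H j hj (hja.trans hv.le)
        calc a = u ⊔ v := huv.symm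
        _ ≤ b := sup_le h1 h2

lemma le_of_meetIrred_imp (b : α) : ∀ a : α, (∀ m, MeetIrred m → b ≤ m → a ≤ m) → a ≤ b := by
  induction b using WellFoundedGT.induction with
  | ind b IH =>
    intro a H
    by_cases hmi : MeetIrred b
    · exact H b hmi le_rfl
    · unfold MeetIrred at hmi
      push_neg at hmi
      by_cases htop : IsTop b
      · exact htop a
      · obtain ⟨u, v, hu, hv, huv⟩ := hmi htop
        have h1 : a ≤ u := IH u hu a fun m hm hmb => H m hm (hu.le.trans hmb)
        have h2 : a ≤ v := IH v hv a fun m hm hmb => H m hm (hv.le.trans hmb)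
        calc a ≤ u ⊓ v := le_inf h1 h2
        _ = b := huv


lemma exists_joinIrred_of_not_le {a b : α} (h : ¬ a ≤ b) :
    ∃ j, JoinIrred j ∧ j ≤ a ∧ ¬ j ≤ b := by
  by_contra hc
  push_neg at hc
  exact h (le_of_joinIrred_imp a b fun j hj hja => hc j hj hja)

lemma exists_meetIrred_of_not_le {a b : α} (h : ¬ a ≤ b) :
    ∃ m, MeetIrred m ∧ b ≤ m ∧ ¬ a ≤ m := by
  by_contra hc
  push_neg at hc
  exact h (le_of_meetIrred_imp b a fun m hm hmb => hc m hm hmb)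

/-- A nonempty finite chain has a greatest element. -/
lemma chain_exists_greatest (S : Finset α) (hS : IsChain (· ≤ ·) (S : Set α))
    (hne : S.Nonempty) : ∃ m ∈ S, ∀ s ∈ S, s ≤ m := by
  obtain ⟨m, hmem, hmax⟩ := S.exists_maximal hne
  refine ⟨m, hmem, fun s hs => ?_⟩
  rcases eq_or_ne s m with rfl | hne'
  · exact le_rfl
  rcases hS hs hmem hne' with h | h
  · exact h
  · exact hmax hs h

lemma chain_exists_least (S : Finset α) (hS : IsChain (· ≤ ·) (S : Set α))
    (hne : S.Nonempty) : ∃ m ∈ S, ∀ s ∈ S, m ≤ s := by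
  obtain ⟨m, hmem, hmin⟩ := S.exists_minimal hne
  refine ⟨m, hmem, fun s hs => ?_⟩
  rcases eq_or_ne s m with rfl | hne'
  · exact le_rfl
  rcases hS hmem hs hne'.symm with h | h
  · exact h
  · exact hmin hs h

lemma chain_card_le_joinIrred :
    ∀ S : Finset α, IsChain (· ≤ ·) (S : Set α) → ∀ a : α, (∀ s ∈ S, s ≤ a) →
      S.card ≤ {j : α | JoinIrred j ∧ j ≤ a}.ncard + 1 := by
  intro S
  induction S using Finset.strongInduction with
  | _ S IH =>
    intro hS a ha
    classical
    rcases S.eq_empty_or_nonempty with rfl | hne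
    · simp
    obtain ⟨m, hmem, hmax⟩ := chain_exists_greatest S hS hne
    have hchain' : IsChain (· ≤ ·) ((S.erase m : Finset α) : Set α) :=
      hS.mono (fun y hy => Finset.mem_coe.mpr (Finset.mem_of_mem_erase (by exact_mod_cast hy)))
    rcases (S.erase m).eq_empty_or_nonempty with he | hne'
    · have : S = {m} := by
        apply Finset.eq_singleton_iff_unique_mem.mpr
        refine ⟨hmem, fun y hy => ?_⟩
        by_contra hy'
        exact (Finset.eq_empty_iff_forall_notMem.mp he y) (Finset.mem_erase.mpr ⟨hy', hy⟩)
      simp [this]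
    obtain ⟨m', hmem', hmax'⟩ := chain_exists_greatest _ hchain' hne'
    have hm'S : m' ∈ S := Finset.mem_of_mem_erase hmem'
    have hm'ne : m' ≠ m := (Finset.mem_erase.mp hmem').1
    have hm'le : m' ≤ m := hmax m' hm'S
    have hnle : ¬ m ≤ m' := fun hle => hm'ne (le_antisymm hm'le hle)
    obtain ⟨j, hj, hjm, hjm'⟩ := exists_joinIrred_of_not_le hnle
    have hIH := IH (S.erase m) (Finset.erase_ssubset hmem) hchain' m' hmax'
    have hsub : insert j {i : α | JoinIrred i ∧ i ≤ m'} ⊆ {i : α | JoinIrred i ∧ i ≤ a} := by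
      intro y hy
      rcases Set.mem_insert_iff.mp hy with rfl | hy'
      · exact ⟨hj, hjm.trans (ha m hmem)⟩
      · exact ⟨hy'.1, hy'.2.trans (hm'le.trans (ha m hmem))⟩
    have hjnot : j ∉ {i : α | JoinIrred i ∧ i ≤ m'} := fun hc => hjm' hc.2
    have hcards : {i : α | JoinIrred i ∧ i ≤ m'}.ncard + 1 ≤ {i : α | JoinIrred i ∧ i ≤ a}.ncard := by
      rw [← Set.ncard_insert_of_notMem hjnot]
      exact Set.ncard_le_ncard hsub (Set.toFinite _)
    have hcardS : S.card = (S.erase m).card + 1 := by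
      have h1 : 1 ≤ S.card := Finset.card_pos.mpr hne
      rw [Finset.card_erase_of_mem hmem]
      omega
    omega

lemma chain_card_le_meetIrred :
    ∀ S : Finset α, IsChain (· ≤ ·) (S : Set α) → ∀ a : α, (∀ s ∈ S, a ≤ s) →
      S.card ≤ {m : α | MeetIrred m ∧ a ≤ m}.ncard + 1 := by
  intro S
  induction S using Finset.strongInduction with
  | _ S IH =>
    intro hS a ha
    classical
    rcases S.eq_empty_or_nonempty with rfl | hne
    · simp
    obtain ⟨m, hmem, hmin⟩ := chain_exists_least S hS hne
    have hchain' : IsChain (· ≤ ·) ((S.erase m : Finset α) : Set α) :=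
      hS.mono (fun y hy => Finset.mem_coe.mpr (Finset.mem_of_mem_erase (by exact_mod_cast hy)))
    rcases (S.erase m).eq_empty_or_nonempty with he | hne'
    · have : S = {m} := by
        apply Finset.eq_singleton_iff_unique_mem.mpr
        refine ⟨hmem, fun y hy => ?_⟩
        by_contra hy'
        exact (Finset.eq_empty_iff_forall_notMem.mp he y) (Finset.mem_erase.mpr ⟨hy', hy⟩)
      simp [this]
    obtain ⟨m', hmem', hmin'⟩ := chain_exists_least _ hchain' hne'
    have hm'S : m' ∈ S := Finset.mem_of_mem_erase hmem'
    have hm'ne : m' ≠ m := (Finset.mem_erase.mp hmem').1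
    have hm'le : m ≤ m' := hmin m' hm'S
    have hnle : ¬ m' ≤ m := fun hle => hm'ne (le_antisymm hle hm'le)
    obtain ⟨w, hw, hwm, hwm'⟩ := exists_meetIrred_of_not_le hnle
    have hIH := IH (S.erase m) (Finset.erase_ssubset hmem) hchain' m' hmin'
    have hsub : insert w {i : α | MeetIrred i ∧ m' ≤ i} ⊆ {i : α | MeetIrred i ∧ a ≤ i} := by
      intro y hy
      rcases Set.mem_insert_iff.mp hy with rfl | hy'
      · exact ⟨hw, (ha m hmem).trans hwm⟩
      · exact ⟨hy'.1, ((ha m hmem).trans hm'le).trans hy'.2⟩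
    have hwnot : w ∉ {i : α | MeetIrred i ∧ m' ≤ i} := fun hc => hwm' hc.2
    have hcards : {i : α | MeetIrred i ∧ m' ≤ i}.ncard + 1 ≤ {i : α | MeetIrred i ∧ a ≤ i}.ncard := by
      rw [← Set.ncard_insert_of_notMem hwnot]
      exact Set.ncard_le_ncard hsub (Set.toFinite _)
    have hcardS : S.card = (S.erase m).card + 1 := by
      have h1 : 1 ≤ S.card := Finset.card_pos.mpr hne
      rw [Finset.card_erase_of_mem hmem]
      omega
    omega

end AuxLemmas

section AuxIdx
variable [Lattice α]

open Classical in
/-- The least index `i` with `j ≤ x i` (defaults to `Fin.last n`). -/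
noncomputable def gIdx {n : ℕ} (x : Fin (n + 1) → α) (j : α) : Fin (n + 1) :=
  (insert (Fin.last n) (Finset.univ.filter fun i => j ≤ x i)).min' (Finset.insert_nonempty _ _)

open Classical in
/-- The least index `i` with `¬ x i ≤ m` (defaults to `Fin.last n`). -/
noncomputable def dIdx {n : ℕ} (x : Fin (n + 1) → α) (m : α) : Fin (n + 1) :=
  (insert (Fin.last n) (Finset.univ.filter fun i => ¬ x i ≤ m)).min' (Finset.insert_nonempty _ _)

variable {n : ℕ} {x : Fin (n + 1) → α}

lemma gIdx_le {j : α} {i : Fin (n + 1)} (h : j ≤ x i) : gIdx x j ≤ i := by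
  classical
  apply Finset.min'_le
  simp [h]

lemma le_x_gIdx (htop : IsTop (x (Fin.last n))) (j : α) : j ≤ x (gIdx x j) := by
  classical
  have := Finset.min'_mem (insert (Fin.last n) (Finset.univ.filter fun i => j ≤ x i))
    (Finset.insert_nonempty _ _)
  rcases Finset.mem_insert.mp this with h | h
  · rw [gIdx, h]; exact htop j
  · exact (Finset.mem_filter.mp h).2

lemma not_le_of_lt_gIdx (htop : IsTop (x (Fin.last n))) {j : α} {i : Fin (n + 1)}
    (h : i < gIdx x j) : ¬ j ≤ x i := fun hle => absurd (gIdx_le hle) (not_le.mpr h)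

lemma gIdx_ne_zero (hbot : IsBot (x 0)) (htop : IsTop (x (Fin.last n))) {j : α}
    (hj : JoinIrred j) : gIdx x j ≠ 0 := by
  intro h0
  have hle : j ≤ x 0 := by rw [← h0]; exact le_x_gIdx htop j
  have : j = x 0 := le_antisymm hle (hbot j)
  exact hj.1 (this ▸ hbot)

lemma dIdx_le {m : α} {i : Fin (n + 1)} (h : ¬ x i ≤ m) : dIdx x m ≤ i := by
  classical
  apply Finset.min'_le
  simp [h]

lemma not_x_dIdx_le (htop : IsTop (x (Fin.last n))) {m : α} (hm : ¬ IsTop m) :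
    ¬ x (dIdx x m) ≤ m := by
  classical
  have := Finset.min'_mem (insert (Fin.last n) (Finset.univ.filter fun i => ¬ x i ≤ m))
    (Finset.insert_nonempty _ _)
  rcases Finset.mem_insert.mp this with h | h
  · rw [dIdx, h]
    intro hle
    exact hm fun b => (htop b).trans hle
  · exact (Finset.mem_filter.mp h).2

lemma x_le_of_lt_dIdx {m : α} {i : Fin (n + 1)} (h : i < dIdx x m) : x i ≤ m := by
  by_contra hc
  exact absurd (dIdx_le hc) (not_le.mpr h)

lemma dIdx_ne_zero (hbot : IsBot (x 0)) (htop : IsTop (x (Fin.last n))) {m : α}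
    (hm : ¬ IsTop m) : dIdx x m ≠ 0 := by
  intro h0
  apply not_x_dIdx_le htop hm
  rw [h0]
  exact hbot m

/-- Key incompatibility: a join-irreducible and a meet-irreducible with the same label
are not comparable. -/
lemma not_le_of_gIdx_eq_dIdx (hbot : IsBot (x 0)) (htop : IsTop (x (Fin.last n)))
    (hcov : ∀ i : Fin n, x i.castSucc ⋖ x i.succ) {j m : α}
    (hj : JoinIrred j) (hm : MeetIrred m) (heq : gIdx x j = dIdx x m) : ¬ j ≤ m := by
  intro hjm
  have hk0 : gIdx x j ≠ 0 := gIdx_ne_zero hbot htop hj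
  set k := gIdx x j with hk
  set i : Fin n := k.pred hk0 with hi
  have hik : i.succ = k := Fin.succ_pred k hk0
  have hcast : i.castSucc < k := hik ▸ (Fin.castSucc_lt_succ : i.castSucc < i.succ)
  have h1 : ¬ j ≤ x i.castSucc := not_le_of_lt_gIdx htop hcast
  have h2 : x i.castSucc ≤ m := x_le_of_lt_dIdx (heq ▸ hcast)
  have h3 : x i.castSucc < x i.castSucc ⊔ j := by
    rcases lt_or_eq_of_le (le_sup_left : x i.castSucc ≤ x i.castSucc ⊔ j) with h | h
    · exact h
    · exact absurd (h ▸ le_sup_right) h1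
  have h4 : x i.castSucc ⊔ j ≤ x i.succ := by
    apply sup_le
    · exact (Fin.castSucc_lt_succ : i.castSucc < i.succ).le |> fun _ => le_of_lt ((hcov i).lt)
    · rw [hik]; exact le_x_gIdx htop j
  have h5 : x i.castSucc ⊔ j = x i.succ := by
    rcases lt_or_eq_of_le h4 with h | h
    · exact absurd h ((hcov i).2 h3)
    · exact h
  have h6 : x i.succ ≤ m := h5 ▸ sup_le h2 hjm
  rw [hik] at h6
  exact not_x_dIdx_le htop hm.1 (heq ▸ h6)

lemma gIdx_surj [Finite α] (hbot : IsBot (x 0)) (htop : IsTop (x (Fin.last n)))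
    (hcov : ∀ i : Fin n, x i.castSucc ⋖ x i.succ) (i : Fin n) :
    ∃ j, JoinIrred j ∧ gIdx x j = i.succ := by
  have hmono : StrictMono x := Fin.strictMono_iff_lt_succ.mpr fun i => (hcov i).lt
  have hnle : ¬ x i.succ ≤ x i.castSucc := (hcov i).lt.not_ge
  obtain ⟨j, hj, hjle, hjnle⟩ := exists_joinIrred_of_not_le hnle
  refine ⟨j, hj, ?_⟩
  have h1 : gIdx x j ≤ i.succ := gIdx_le hjle
  rcases lt_or_eq_of_le h1 with h | h
  · exfalso
    have h2 : gIdx x j ≤ i.castSucc := Fin.le_castSucc_iff.mpr h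
    exact hjnle ((le_x_gIdx htop j).trans (hmono.monotone h2))
  · exact h

lemma dIdx_surj [Finite α] (hbot : IsBot (x 0)) (htop : IsTop (x (Fin.last n)))
    (hcov : ∀ i : Fin n, x i.castSucc ⋖ x i.succ) (i : Fin n) :
    ∃ m, MeetIrred m ∧ dIdx x m = i.succ := by
  have hmono : StrictMono x := Fin.strictMono_iff_lt_succ.mpr fun i => (hcov i).lt
  have hnle : ¬ x i.succ ≤ x i.castSucc := (hcov i).lt.not_ge
  obtain ⟨m, hm, hmle, hmnle⟩ := exists_meetIrred_of_not_le hnle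
  refine ⟨m, hm, ?_⟩
  have h1 : dIdx x m ≤ i.succ := dIdx_le hmnle
  rcases lt_or_eq_of_le h1 with h | h
  · exfalso
    have h2 : dIdx x m ≤ i.castSucc := Fin.le_castSucc_iff.mpr h
    exact not_x_dIdx_le htop hm.1 ((hmono.monotone h2).trans hmle)
  · exact h


end AuxIdx

/-- The spine of a trim lattice, with the induced lattice structure, is distributive. -/
theorem spine_distributive [Lattice α] [Finite α] (h : Trim α) (a b c : α)
    (ha : Spine a) (hb : Spine b) (hc : Spine c) :
    a ⊓ (b ⊔ c) = (a ⊓ b) ⊔ (a ⊓ c) := by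
  classical
  have _inst : Fintype α := Fintype.ofFinite α
  obtain ⟨n, x, ⟨hbot, htop, hcov, -⟩, hJcard, hMcard⟩ := h
  have hmono : StrictMono x := Fin.strictMono_iff_lt_succ.mpr fun i => (hcov i).lt
  have hJn : {v : α | JoinIrred v}.ncard = n := by
    rw [← Nat.card_coe_set_eq]; exact hJcard
  -- every chain has at most n + 1 elements
  have hub : ∀ D : Set α, IsChain (· ≤ ·) D → D.ncard ≤ n + 1 := by
    intro D hD
    have hfin : D.Finite := Set.toFinite D
    have h1 : IsChain (· ≤ ·) (hfin.toFinset : Set α) := by rwa [Set.Finite.coe_toFinset]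
    have h2 := chain_card_le_joinIrred hfin.toFinset h1 (x (Fin.last n)) (fun s _ => htop s)
    have h3 : {j : α | JoinIrred j ∧ j ≤ x (Fin.last n)}.ncard ≤ {v : α | JoinIrred v}.ncard :=
      Set.ncard_le_ncard (fun j hj => hj.1) (Set.toFinite _)
    rw [Set.ncard_eq_toFinset_card D hfin]
    omega
  have hrangechain : IsChain (· ≤ ·) (Set.range x) := by
    rintro _ ⟨i, rfl⟩ _ ⟨j, rfl⟩ hne
    rcases le_total i j with hij | hij
    · exact Or.inl (hmono.monotone hij)
    · exact Or.inr (hmono.monotone hij)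
  have hrangecard : (Set.range x).ncard = n + 1 := by
    rw [← Nat.card_coe_set_eq, Nat.card_range_of_injective hmono.injective]
    simp
  -- spine elements have many irreducibles around them
  have hspine : ∀ v : α, Spine v →
      n ≤ {j : α | JoinIrred j ∧ j ≤ v}.ncard + {m : α | MeetIrred m ∧ v ≤ m}.ncard := by
    intro v hv
    obtain ⟨C, hvC, hC, hCmax⟩ := hv
    have hCcard : C.ncard = n + 1 :=
      le_antisymm (hub C hC) (hrangecard ▸ hCmax _ hrangechain)
    set C1 : Set α := {c ∈ C | c ≤ v} with hC1def
    set C2 : Set α := {c ∈ C | v ≤ c} with hC2def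
    have hunion : C1 ∪ C2 = C := by
      ext w
      constructor
      · rintro (hw | hw) <;> exact hw.1
      · intro hw
        rcases eq_or_ne w v with rfl | hne
        · exact Or.inl ⟨hw, le_rfl⟩
        · rcases hC hw hvC hne with h | h
          · exact Or.inl ⟨hw, h⟩
          · exact Or.inr ⟨hw, h⟩
    have hIE := Set.ncard_union_add_ncard_inter C1 C2 (Set.toFinite _) (Set.toFinite _)
    have hpos : 0 < (C1 ∩ C2).ncard :=
      (Set.ncard_pos (Set.toFinite _)).mpr ⟨v, ⟨hvC, le_rfl⟩, ⟨hvC, le_rfl⟩⟩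
    have hC1bound : C1.ncard ≤ {j : α | JoinIrred j ∧ j ≤ v}.ncard + 1 := by
      have hfin : C1.Finite := Set.toFinite C1
      have hch : IsChain (· ≤ ·) (hfin.toFinset : Set α) := by
        rw [Set.Finite.coe_toFinset]
        exact hC.mono (fun w hw => hw.1)
      have := chain_card_le_joinIrred hfin.toFinset hch v
        (fun s hs => ((Set.Finite.mem_toFinset hfin).mp hs).2)
      rwa [Set.ncard_eq_toFinset_card C1 hfin]
    have hC2bound : C2.ncard ≤ {m : α | MeetIrred m ∧ v ≤ m}.ncard + 1 := by
      have hfin : C2.Finite := Set.toFinite C2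
      have hch : IsChain (· ≤ ·) (hfin.toFinset : Set α) := by
        rw [Set.Finite.coe_toFinset]
        exact hC.mono (fun w hw => hw.1)
      have := chain_card_le_meetIrred hfin.toFinset hch v
        (fun s hs => ((Set.Finite.mem_toFinset hfin).mp hs).2)
      rwa [Set.ncard_eq_toFinset_card C2 hfin]
    rw [hunion, hCcard] at hIE
    omega
  -- Finset bookkeeping
  set G : Finset α := Finset.univ.filter JoinIrred with hGdef
  set M : Finset α := Finset.univ.filter MeetIrred with hMdef
  have hGcard : G.card = n := by
    rw [hGdef, ← Fintype.card_subtype, ← Nat.card_eq_fintype_card]; exact hJcard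
  have hMcard' : M.card = n := by
    rw [hMdef, ← Fintype.card_subtype, ← Nat.card_eq_fintype_card]; exact hMcard
  have hinjG : Set.InjOn (gIdx x) G := by
    apply Finset.card_image_iff.mp
    have hsub : ((Finset.univ : Finset (Fin n)).image Fin.succ) ⊆ G.image (gIdx x) := by
      intro k hk
      obtain ⟨i, -, rfl⟩ := Finset.mem_image.mp hk
      obtain ⟨j, hj, hgj⟩ := gIdx_surj hbot htop hcov i
      exact Finset.mem_image.mpr ⟨j, Finset.mem_filter.mpr ⟨Finset.mem_univ _, hj⟩, hgj⟩
    have h1 : n ≤ (G.image (gIdx x)).card := by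
      have := Finset.card_le_card hsub
      rwa [Finset.card_image_of_injective _ (Fin.succ_injective n), Finset.card_univ,
        Fintype.card_fin] at this
    have h2 : (G.image (gIdx x)).card ≤ G.card := Finset.card_image_le
    omega
  have hinjM : Set.InjOn (dIdx x) M := by
    apply Finset.card_image_iff.mp
    have hsub : ((Finset.univ : Finset (Fin n)).image Fin.succ) ⊆ M.image (dIdx x) := by
      intro k hk
      obtain ⟨i, -, rfl⟩ := Finset.mem_image.mp hk
      obtain ⟨m, hm, hdm⟩ := dIdx_surj hbot htop hcov i
      exact Finset.mem_image.mpr ⟨m, Finset.mem_filter.mpr ⟨Finset.mem_univ _, hm⟩, hdm⟩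
    have h1 : n ≤ (M.image (dIdx x)).card := by
      have := Finset.card_le_card hsub
      rwa [Finset.card_image_of_injective _ (Fin.succ_injective n), Finset.card_univ,
        Fintype.card_fin] at this
    have h2 : (M.image (dIdx x)).card ≤ M.card := Finset.card_image_le
    omega
  -- the key "prime" property on the spine
  have key : ∀ v : α, Spine v → ∀ j, JoinIrred j → ¬ j ≤ v →
      ∃ m, MeetIrred m ∧ v ≤ m ∧ dIdx x m = gIdx x j := by
    intro v hv j hj hjv
    set Jv : Finset α := Finset.univ.filter (fun w => JoinIrred w ∧ w ≤ v) with hJvdef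
    set Mv : Finset α := Finset.univ.filter (fun w => MeetIrred w ∧ v ≤ w) with hMvdef
    have hJvG : Jv ⊆ G := fun w hw =>
      Finset.mem_filter.mpr ⟨Finset.mem_univ _, (Finset.mem_filter.mp hw).2.1⟩
    have hMvM : Mv ⊆ M := fun w hw =>
      Finset.mem_filter.mpr ⟨Finset.mem_univ _, (Finset.mem_filter.mp hw).2.1⟩
    have hsetJ : {w : α | JoinIrred w ∧ w ≤ v}.ncard = Jv.card := by
      rw [← Set.ncard_coe_finset]
      congr 1
      ext w
      simp [hJvdef]
    have hsetM : {w : α | MeetIrred w ∧ v ≤ w}.ncard = Mv.card := by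
      rw [← Set.ncard_coe_finset]
      congr 1
      ext w
      simp [hMvdef]
    have hlow : n ≤ Jv.card + Mv.card := by
      have := hspine v hv
      rwa [hsetJ, hsetM] at this
    set imJ : Finset (Fin (n + 1)) := Jv.image (gIdx x) with himJdef
    set imM : Finset (Fin (n + 1)) := Mv.image (dIdx x) with himMdef
    have hcardJ : imJ.card = Jv.card :=
      Finset.card_image_of_injOn (hinjG.mono (by exact_mod_cast hJvG))
    have hcardM : imM.card = Mv.card :=
      Finset.card_image_of_injOn (hinjM.mono (by exact_mod_cast hMvM))
    have hdisj : Disjoint imJ imM := by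
      rw [Finset.disjoint_left]
      intro k hkJ hkM
      obtain ⟨j', hj'mem, hj'eq⟩ := Finset.mem_image.mp hkJ
      obtain ⟨m', hm'mem, hm'eq⟩ := Finset.mem_image.mp hkM
      obtain ⟨-, hj'⟩ := Finset.mem_filter.mp hj'mem
      obtain ⟨-, hm'⟩ := Finset.mem_filter.mp hm'mem
      exact not_le_of_gIdx_eq_dIdx hbot htop hcov hj'.1 hm'.1
        (hj'eq.trans hm'eq.symm) (hj'.2.trans hm'.2)
    have hsub1 : imJ ∪ imM ⊆ (Finset.univ : Finset (Fin (n + 1))).erase 0 := by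
      intro k hk
      rcases Finset.mem_union.mp hk with hk' | hk'
      · obtain ⟨j', hj'mem, rfl⟩ := Finset.mem_image.mp hk'
        exact Finset.mem_erase.mpr
          ⟨gIdx_ne_zero hbot htop (Finset.mem_filter.mp hj'mem).2.1, Finset.mem_univ _⟩
      · obtain ⟨m', hm'mem, rfl⟩ := Finset.mem_image.mp hk'
        exact Finset.mem_erase.mpr
          ⟨dIdx_ne_zero hbot htop (Finset.mem_filter.mp hm'mem).2.1.1, Finset.mem_univ _⟩
    have hucard : (imJ ∪ imM).card = Jv.card + Mv.card := by
      rw [Finset.card_union_of_disjoint hdisj, hcardJ, hcardM]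
    have herase : ((Finset.univ : Finset (Fin (n + 1))).erase 0).card = n := by
      rw [Finset.card_erase_of_mem (Finset.mem_univ _), Finset.card_univ, Fintype.card_fin]
      omega
    have hequnion : imJ ∪ imM = (Finset.univ : Finset (Fin (n + 1))).erase 0 :=
      Finset.eq_of_subset_of_card_le hsub1 (by omega)
    have hmem : gIdx x j ∈ imJ ∪ imM := by
      rw [hequnion]
      exact Finset.mem_erase.mpr ⟨gIdx_ne_zero hbot htop hj, Finset.mem_univ _⟩
    rcases Finset.mem_union.mp hmem with hk' | hk'
    · exfalso
      obtain ⟨j', hj'mem, hj'eq⟩ := Finset.mem_image.mp hk'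
      have : j' = j := hinjG (hJvG hj'mem) (Finset.mem_filter.mpr ⟨Finset.mem_univ _, hj⟩) hj'eq
      exact hjv (this ▸ (Finset.mem_filter.mp hj'mem).2.2)
    · obtain ⟨m, hmmem, hmeq⟩ := Finset.mem_image.mp hk'
      obtain ⟨-, hm⟩ := Finset.mem_filter.mp hmmem
      exact ⟨m, hm.1, hm.2, hmeq⟩
  -- conclusion
  apply le_antisymm
  · apply le_of_joinIrred_imp
    intro j hj hle
    have hja : j ≤ a := hle.trans inf_le_left
    have hjbc : j ≤ b ⊔ c := hle.trans inf_le_right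
    by_cases hjb : j ≤ b
    · exact (le_inf hja hjb).trans le_sup_left
    by_cases hjc : j ≤ c
    · exact (le_inf hja hjc).trans le_sup_right
    exfalso
    obtain ⟨mb, hmb, hbmb, hdb⟩ := key b hb j hj hjb
    obtain ⟨mc, hmc, hcmc, hdc⟩ := key c hc j hj hjc
    have hmbmc : mb = mc :=
      hinjM (Finset.mem_filter.mpr ⟨Finset.mem_univ _, hmb⟩)
        (Finset.mem_filter.mpr ⟨Finset.mem_univ _, hmc⟩) (hdb.trans hdc.symm)
    have hsup : b ⊔ c ≤ mb := sup_le hbmb (hmbmc ▸ hcmc)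
    exact not_le_of_gIdx_eq_dIdx hbot htop hcov hj hmb hdb.symm (hjbc.trans hsup)
  · exact le_inf (sup_le inf_le_left inf_le_left)
      (sup_le (inf_le_right.trans le_sup_left) (inf_le_right.trans le_sup_right))
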